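/- Let α_i = (H+1)/(H+i), α_τ^i = α_i Π_{j=i+1}^τ (1-α_j), and for j ≥ i define w_j^i = Σ_{i'=i}^j α_{i'}^i. Then w_j^{i_1} ≤ w_j^{i_2} whenever j ≥ i_1 ≥ i_2 ≥ 1. -/

import Mathlib

open Finset

/-- The Q-learning step size `α_i = (H+1)/(H+i)`. -/
noncomputable def qAlpha (H : ℝ) (i : ℕ) : ℝ := (H + 1) / (H + i)

/-- The cumulative weight `α_τ^i = α_i ∏_{j=i+1}^τ (1 - α_j)`. -/
noncomputable def qW (H : ℝ) (τ i : ℕ) : ℝ :=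
  qAlpha H i * ∏ j ∈ Ioc i τ, (1 - qAlpha H j)

/-- `w_j^i = Σ_{i'=i}^j α_{i'}^i`. -/
noncomputable def qWsum (H : ℝ) (j i : ℕ) : ℝ := ∑ i' ∈ Icc i j, qW H i' i

lemma qWsum_rec (H : ℝ) (hH : 1 ≤ H) (i j : ℕ) (hij : i ≤ j) :
    qWsum H j i = (H + 1) / (H + i) + (i / (H + i)) * qWsum H j (i + 1) := by
  have hHi : (0:ℝ) < H + i := by positivity
  have hHi1 : (0:ℝ) < H + (i + 1 : ℕ) := by push_cast; positivity
  unfold qWsum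
  rw [Icc_eq_cons_Ioc hij, Finset.sum_cons, Finset.mul_sum]
  have h1 : qW H i i = (H + 1) / (H + i) := by
    simp [qW, qAlpha]
  rw [h1, Finset.Icc_add_one_left_eq_Ioc]
  congr 1
  apply Finset.sum_congr rfl
  intro i' hi'
  have hmem : i + 1 ≤ i' := (Finset.mem_Ioc.mp hi').1
  have hsplit : Ioc i i' = (Ioc (i+1) i').cons (i+1) left_notMem_Ioc := by
    rw [← Finset.Icc_add_one_left_eq_Ioc, Icc_eq_cons_Ioc hmem]
  rw [qW, qW, hsplit, Finset.prod_cons]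
  have h2 : (1 - qAlpha H (i+1)) = i / (H + (i+1)) := by
    rw [qAlpha]
    push_cast
    field_simp
    ring
  rw [h2, qAlpha, qAlpha]
  push_cast
  field_simp

lemma qWsum_bound (H : ℝ) (hH : 1 ≤ H) : ∀ d i j : ℕ, j = i + d →
    qWsum H j i ≤ (H + 1) / H := by
  have hH0 : (0:ℝ) < H := by linarith
  intro d
  induction d with
  | zero =>
    intro i j hj
    subst hj
    simp only [Nat.add_zero, qWsum, Icc_self, Finset.sum_singleton, qW, Ioc_self,
      Finset.prod_empty, mul_one, qAlpha]
    gcongr <;> first | linarith | simp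
  | succ d ih =>
    intro i j hj
    have hij : i ≤ j := by omega
    rw [qWsum_rec H hH i j hij]
    have hHi : (0:ℝ) < H + i := by positivity
    have ih' := ih (i+1) j (by omega)
    have hi0 : (0:ℝ) ≤ (i:ℝ) := by positivity
    have h1 : (i:ℝ) / (H + i) * qWsum H j (i+1) ≤ (i:ℝ) / (H + i) * ((H+1)/H) := by
      apply mul_le_mul_of_nonneg_left ih' (by positivity)
    calc (H + 1) / (H + i) + (i:ℝ) / (H + i) * qWsum H j (i+1)
        ≤ (H + 1) / (H + i) + (i:ℝ) / (H + i) * ((H+1)/H) := by linarith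
      _ = (H + 1) / H := by field_simp

lemma qWsum_step (H : ℝ) (hH : 1 ≤ H) (i j : ℕ) (hij : i + 1 ≤ j) :
    qWsum H j (i + 1) ≤ qWsum H j i := by
  have hH0 : (0:ℝ) < H := by linarith
  have hHi : (0:ℝ) < H + i := by positivity
  rw [qWsum_rec H hH i j (by omega)]
  have hb := qWsum_bound H hH (j - (i+1)) (i+1) j (by omega)
  have key : H * qWsum H j (i+1) ≤ H + 1 := by
    calc H * qWsum H j (i+1) ≤ H * ((H+1)/H) :=
          mul_le_mul_of_nonneg_left hb (le_of_lt hH0)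
      _ = H + 1 := by field_simp
  have hcomb : (H+1)/(H+i) + (i:ℝ)/(H+i) * qWsum H j (i+1)
      = ((H+1) + i * qWsum H j (i+1))/(H+i) := by ring
  rw [hcomb, le_div_iff₀ hHi]
  nlinarith [key]

/-- Monotonicity of the partial weight sums: `w_j^{i₁} ≤ w_j^{i₂}` for `j ≥ i₁ ≥ i₂ ≥ 1`. -/
theorem stmt4 (H : ℝ) (hH : 1 ≤ H) (i₁ i₂ j : ℕ)
    (h2 : 1 ≤ i₂) (h21 : i₂ ≤ i₁) (h1j : i₁ ≤ j) :
    qWsum H j i₁ ≤ qWsum H j i₂ := by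
  induction i₁, h21 using Nat.le_induction with
  | base => exact le_refl _
  | succ i hi ih =>
    exact le_trans (qWsum_step H hH i j h1j) (ih (by omega))
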